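/- Let F be a complete filtered vector space of finite type equipped with a continuous linear coboundary operator d satisfying d² = 0 and d(F^n) ⊆ F^n for all n. Then the homology H(F) = ker d / im d, with the filtration induced from F, is a complete filtered vector space. -/

import Mathlib

variable {K V W : Type*} [Field K] [AddCommGroup V] [Module K V]

/-- A (decreasing) filtration on a vector space: `F 0` is everything, the `F n`
are decreasing, and their intersection is zero. -/
def IsFilt (F : ℕ → Submodule K V) : Prop :=
  F 0 = ⊤ ∧ (∀ n, F (n + 1) ≤ F n) ∧ (⨅ n, F n) = ⊥

/-- Convergence of a sequence in the filtration topology. -/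
def TendstoFilt (F : ℕ → Submodule K V) (x : ℕ → V) (l : V) : Prop :=
  ∀ n, ∃ m, ∀ i, m ≤ i → l - x i ∈ F n

/-- Cauchy sequences for the filtration topology. -/
def CauchyFilt (F : ℕ → Submodule K V) (x : ℕ → V) : Prop :=
  ∀ n, ∃ m, ∀ i j, m ≤ i → m ≤ j → x i - x j ∈ F n

/-- Completeness: every Cauchy sequence converges. -/
def CompleteFilt (F : ℕ → Submodule K V) : Prop :=
  ∀ x : ℕ → V, CauchyFilt F x → ∃ l, TendstoFilt F x l

/-- A subspace is closed in the filtration topology iff it contains all limits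
of its convergent sequences. -/
def ClosedFilt (F : ℕ → Submodule K V) (B : Submodule K V) : Prop :=
  ∀ (x : ℕ → V) (l : V), (∀ i, x i ∈ B) → TendstoFilt F x l → l ∈ B

/-- Finite type: each quotient `F n / F (n+1)` is finite dimensional. -/
def FiniteTypeFilt (F : ℕ → Submodule K V) : Prop :=
  ∀ n, FiniteDimensional K (↥(F n) ⧸ Submodule.comap (F n).subtype (F (n + 1)))

lemma filt_mono {F : ℕ → Submodule K V} (hF : IsFilt F) : Antitone F :=
  antitone_nat_of_succ_le hF.2.1

lemma antitone_nat_stab (f : ℕ → ℕ) (hf : ∀ i j, i ≤ j → f j ≤ f i) :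
    ∃ m, ∀ k, m ≤ k → f k = f m := by
  obtain ⟨a, ⟨m, rfl⟩, hmin⟩ := wellFounded_lt.has_min (Set.range f) ⟨f 0, ⟨0, rfl⟩⟩
  exact ⟨m, fun k hk => le_antisymm (hf m k hk) (not_lt.1 (hmin (f k) ⟨k, rfl⟩))⟩

lemma filt_quot_fd {F : ℕ → Submodule K V} (hF : IsFilt F) (hFt : FiniteTypeFilt F) :
    ∀ n, FiniteDimensional K (V ⧸ F n) := by
  intro n
  induction n with
  | zero =>
    have : Subsingleton (V ⧸ F 0) := Submodule.Quotient.subsingleton_iff.2 hF.1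
    infer_instance
  | succ n ih =>
    have hle : F (n + 1) ≤ F n := hF.2.1 n
    have h1 : FiniteDimensional K (↥(F n) ⧸ Submodule.comap (F n).subtype (F (n + 1))) := hFt n
    set π := (F (n + 1)).mkQ with hπ
    have hker : LinearMap.ker (π ∘ₗ (F n).subtype) = Submodule.comap (F n).subtype (F (n + 1)) := by
      rw [LinearMap.ker_comp, hπ, Submodule.ker_mkQ]
    have hrange : LinearMap.range (π ∘ₗ (F n).subtype) = (F n).map π := by
      rw [LinearMap.range_comp, Submodule.range_subtype]
    have e1 : (↥(F n) ⧸ Submodule.comap (F n).subtype (F (n + 1))) ≃ₗ[K]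
        ↥((F n).map π) := by
      rw [← hker, ← hrange]
      exact (π ∘ₗ (F n).subtype).quotKerEquivRange
    have h2 : FiniteDimensional K ((F n).map π) := Module.Finite.equiv e1
    have e2 : ((V ⧸ F (n + 1)) ⧸ (F n).map π) ≃ₗ[K] V ⧸ F n :=
      Submodule.quotientQuotientEquivQuotient (F (n + 1)) (F n) hle
    have h3 : FiniteDimensional K ((V ⧸ F (n + 1)) ⧸ (F n).map π) :=
      Module.Finite.equiv e2.symm
    have h4 : IsNoetherian K (V ⧸ F (n + 1)) :=
      (isNoetherian_iff_submodule_quotient ((F n).map π)).2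
        ⟨IsNoetherian.iff_fg.2 h2, IsNoetherian.iff_fg.2 h3⟩
    exact IsNoetherian.iff_fg.1 h4

lemma chain_stab {F : ℕ → Submodule K V} (hF : IsFilt F) (hFt : FiniteTypeFilt F)
    (T : ℕ → Submodule K V) (hT : ∀ i j, i ≤ j → T j ≤ T i) (n : ℕ) :
    ∃ μ, n ≤ μ ∧ ∀ m, μ ≤ m → T m ⊔ F n = T μ ⊔ F n := by
  haveI := filt_quot_fd hF hFt n
  set Q : ℕ → Submodule K (V ⧸ F n) := fun m => (T m).map (F n).mkQ with hQdef
  have hQ : ∀ i j, i ≤ j → Q j ≤ Q i := fun i j h => Submodule.map_mono (hT i j h)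
  obtain ⟨m₀, hm₀⟩ := antitone_nat_stab (fun m => Module.finrank K (Q m))
    (fun i j h => Submodule.finrank_mono (hQ i j h))
  have hQs : ∀ k, m₀ ≤ k → Q k = Q m₀ := fun k hk =>
    Submodule.eq_of_le_of_finrank_le (hQ m₀ k hk) (hm₀ k hk).ge
  refine ⟨max n m₀, le_max_left _ _, fun m hm => ?_⟩
  have h1 : Q m = Q (max n m₀) := by
    rw [hQs m (le_trans (le_max_right _ _) hm), hQs (max n m₀) (le_max_right _ _)]
  have h2 : Submodule.comap (F n).mkQ (Q m) = Submodule.comap (F n).mkQ (Q (max n m₀)) := by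
    rw [h1]
  simpa only [hQdef, Submodule.comap_map_eq, Submodule.ker_mkQ] using h2

lemma closed_range {F : ℕ → Submodule K V} (hF : IsFilt F) (hFc : CompleteFilt F)
    (hFt : FiniteTypeFilt F) (d : V →ₗ[K] V) (hdF : ∀ n, ∀ x ∈ F n, d x ∈ F n)
    {z : V} (hz : ∀ m, z ∈ LinearMap.range d ⊔ F m) : z ∈ LinearMap.range d := by
  classical
  set T : ℕ → Submodule K V := fun m => (F m).comap d with hTdef
  have hT : ∀ i j, i ≤ j → T j ≤ T i := fun i j h x hx => filt_mono hF h hx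
  obtain ⟨μ, hμ1, hμ2⟩ : ∃ μ : ℕ → ℕ, (∀ n, n ≤ μ n) ∧
      ∀ n m, μ n ≤ m → T m ⊔ F n = T (μ n) ⊔ F n := by
    choose μ h1 h2 using chain_stab hF hFt T hT
    exact ⟨μ, h1, h2⟩
  have hS : ∀ m, ∃ a, d a - z ∈ F m := by
    intro m
    obtain ⟨b, hb, f, hf, hbf⟩ := Submodule.mem_sup.1 (hz m)
    obtain ⟨a, rfl⟩ := hb
    refine ⟨a, ?_⟩
    have : d a - z = -f := by rw [← hbf]; abel
    rw [this]; exact (F m).neg_mem hf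
  -- step function
  have step : ∀ n (a : V), ∃ a', d a - z ∈ F (μ n) →
      (a' - a ∈ F n ∧ d a' - z ∈ F (μ (n + 1))) := by
    intro n a
    by_cases ha : d a - z ∈ F (μ n)
    · set m := max (μ n) (μ (n + 1)) with hm
      obtain ⟨b, hb⟩ := hS m
      have hab : a - b ∈ T (μ n) := by
        have h : d (a - b) = (d a - z) - (d b - z) := by rw [map_sub]; abel
        have : d (a - b) ∈ F (μ n) := by
          rw [h]
          exact (F (μ n)).sub_mem ha (filt_mono hF (le_max_left _ _) hb)
        exact this
      have hab2 : a - b ∈ T m ⊔ F n := by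
        rw [hμ2 n m (le_max_left _ _)]
        exact Submodule.mem_sup_left hab
      obtain ⟨t, ht, f, hf, htf⟩ := Submodule.mem_sup.1 hab2
      refine ⟨b + t, fun _ => ⟨?_, ?_⟩⟩
      · have h' : f = a - b - t := by rw [← htf]; abel
        have h2 : b + t - a = -f := by rw [h']; abel
        rw [h2]; exact (F n).neg_mem hf
      · have h : d (b + t) - z = (d b - z) + d t := by rw [map_add]; abel
        rw [h]
        refine (F (μ (n + 1))).add_mem ?_ ?_
        · exact filt_mono hF (le_max_right _ _) hb
        · exact filt_mono hF (le_max_right _ _) ht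
    · exact ⟨a, fun h => absurd h ha⟩
  choose g hg using step
  obtain ⟨a0, ha0⟩ := hS (μ 0)
  set a : ℕ → V := fun n => Nat.rec a0 (fun n an => g n an) n with hadef
  have inv : ∀ n, d (a n) - z ∈ F (μ n) := by
    intro n
    induction n with
    | zero => exact ha0
    | succ n ih => exact (hg n (a n) ih).2
  have hstep : ∀ n, a (n + 1) - a n ∈ F n := fun n => (hg n (a n) (inv n)).1
  have tele : ∀ i k, a (i + k) - a i ∈ F i := by
    intro i k
    induction k with
    | zero => simpa using (F i).zero_mem
    | succ k ih =>
      have h : a (i + (k + 1)) - a i = (a (i + k + 1) - a (i + k)) + (a (i + k) - a i) := by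
        rw [show i + (k + 1) = i + k + 1 from rfl]; abel
      rw [h]
      exact (F i).add_mem (filt_mono hF (Nat.le_add_right i k) (hstep (i + k))) ih
  have hcauchy : CauchyFilt F a := by
    intro n
    refine ⟨n, fun i j hi hj => ?_⟩
    rcases le_total i j with h | h
    · have := tele i (j - i)
      rw [Nat.add_sub_cancel' h] at this
      have h2 : a i - a j = -(a j - a i) := by abel
      rw [h2]
      exact (F n).neg_mem (filt_mono hF hi this)
    · have := tele j (i - j)
      rw [Nat.add_sub_cancel' h] at this
      exact filt_mono hF hj this
  obtain ⟨l, hl⟩ := hFc a hcauchy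
  have hfin : ∀ n, d l - z ∈ F n := by
    intro n
    obtain ⟨p, hp⟩ := hl n
    set i := max n p with hi
    have h1 : l - a i ∈ F n := hp i (le_max_right _ _)
    have h2 : d l - z = d (l - a i) + (d (a i) - z) := by rw [map_sub]; abel
    rw [h2]
    refine (F n).add_mem (hdF n _ h1) ?_
    exact filt_mono hF (le_trans (le_max_left _ _) (hμ1 i)) (inv i)
  have : d l - z ∈ (⊥ : Submodule K V) := by
    rw [← hF.2.2]
    exact (Submodule.mem_iInf _).2 hfin
  rw [Submodule.mem_bot, sub_eq_zero] at this
  exact ⟨l, this⟩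

/-- If `F` is a complete filtered vector space of finite type with a filtration-preserving
coboundary operator `d` (with `d² = 0`), then the homology `ker d / im d`, with the
induced filtration, is a complete filtered vector space. -/
theorem stmt3 (F : ℕ → Submodule K V) (hF : IsFilt F) (hFc : CompleteFilt F)
    (hFt : FiniteTypeFilt F) (d : V →ₗ[K] V) (hd2 : d ∘ₗ d = 0)
    (hdF : ∀ n, ∀ x ∈ F n, d x ∈ F n) :
    IsFilt (fun n => ((F n).comap (LinearMap.ker d).subtype).map
        ((LinearMap.range d).comap (LinearMap.ker d).subtype).mkQ) ∧
      CompleteFilt (fun n => ((F n).comap (LinearMap.ker d).subtype).map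
        ((LinearMap.range d).comap (LinearMap.ker d).subtype).mkQ) := by
  classical
  set Z := LinearMap.ker d with hZ
  set B' := (LinearMap.range d).comap Z.subtype with hB'
  set G : ℕ → Submodule K (↥Z ⧸ B') :=
    fun n => ((F n).comap Z.subtype).map B'.mkQ with hG
  constructor
  · refine ⟨?_, ?_, ?_⟩
    · show ((F 0).comap Z.subtype).map B'.mkQ = ⊤
      rw [hF.1, Submodule.comap_top, Submodule.map_top, Submodule.range_mkQ]
    · intro n
      exact Submodule.map_mono (Submodule.comap_mono (hF.2.1 n))
    · rw [eq_bot_iff]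
      intro h hh
      have hh' : ∀ n, h ∈ G n := (Submodule.mem_iInf _).1 hh
      obtain ⟨z₀, rfl⟩ := B'.mkQ_surjective h
      have hz : ∀ n, (z₀ : V) ∈ LinearMap.range d ⊔ F n := by
        intro n
        obtain ⟨w, hw, hw2⟩ := hh' n
        have hdiff : z₀ - w ∈ B' := by
          have h0 := hw2.symm
          rwa [Submodule.mkQ_apply, Submodule.mkQ_apply, Submodule.Quotient.eq] at h0
        have h1 : ((z₀ - w : ↥Z) : V) ∈ LinearMap.range d := hdiff
        have h2 : (z₀ : V) = ((z₀ - w : ↥Z) : V) + (w : V) := by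
          push_cast; abel
        rw [h2]
        exact Submodule.add_mem_sup h1 hw
      have : (z₀ : V) ∈ LinearMap.range d := closed_range hF hFc hFt d hdF hz
      rw [Submodule.mem_bot, Submodule.mkQ_apply, Submodule.Quotient.mk_eq_zero]
      exact this
  · intro x hx
    choose m hm using hx
    set M : ℕ → ℕ := fun n => Nat.rec (m 0) (fun n Mn => max Mn (m (n + 1))) n with hM
    have hMmono : Monotone M := monotone_nat_of_le_succ (fun n => le_max_left _ _)
    have hMm : ∀ n, m n ≤ M n := by
      intro n
      cases n with
      | zero => exact le_refl _
      | succ n => exact le_max_right _ _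
    have hdiff : ∀ n, x (M (n + 1)) - x (M n) ∈ G n := by
      intro n
      exact hm n (M (n + 1)) (M n) (le_trans (hMm n) (hMmono (Nat.le_succ n)))
        (hMm n)
    have hdiff' : ∀ n, ∃ w : ↥Z, (w : V) ∈ F n ∧ B'.mkQ w = x (M (n + 1)) - x (M n) := by
      intro n
      obtain ⟨w, hw, hw2⟩ := hdiff n
      exact ⟨w, hw, hw2⟩
    choose v hv1 hv2 using hdiff'
    obtain ⟨y0, hy0⟩ := B'.mkQ_surjective (x (M 0))
    set y : ℕ → ↥Z := fun n => Nat.rec y0 (fun n yn => yn + v n) n with hy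
    have hyx : ∀ n, B'.mkQ (y n) = x (M n) := by
      intro n
      induction n with
      | zero => exact hy0
      | succ n ih =>
        show B'.mkQ (y n + v n) = x (M (n + 1))
        rw [map_add, ih, hv2 n]
        abel
    have tele : ∀ i k, ((y (i + k) : V) - (y i : V)) ∈ F i := by
      intro i k
      induction k with
      | zero => simpa using (F i).zero_mem
      | succ k ih =>
        have hh : y (i + (k + 1)) = y (i + k) + v (i + k) := rfl
        have h : (y (i + (k + 1)) : V) - (y i : V)
            = (v (i + k) : V) + ((y (i + k) : V) - (y i : V)) := by
          rw [hh]; push_cast; abel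
        rw [h]
        exact (F i).add_mem (filt_mono hF (Nat.le_add_right i k) (hv1 (i + k))) ih
    have hcauchy : CauchyFilt F (fun n => (y n : V)) := by
      intro n
      refine ⟨n, fun i j hi hj => ?_⟩
      rcases le_total i j with h | h
      · have hht := tele i (j - i)
        rw [Nat.add_sub_cancel' h] at hht
        have h2 : (y i : V) - (y j : V) = -((y j : V) - (y i : V)) := by abel
        rw [h2]
        exact (F n).neg_mem (filt_mono hF hi hht)
      · have hht := tele j (i - j)
        rw [Nat.add_sub_cancel' h] at hht
        exact filt_mono hF hj hht
    obtain ⟨l, hl⟩ := hFc _ hcauchy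
    have hlZ : l ∈ Z := by
      have hfin : ∀ n, d l ∈ F n := by
        intro n
        obtain ⟨p, hp⟩ := hl n
        have h1 : l - (y (max n p) : V) ∈ F n := hp _ (le_max_right _ _)
        have h2 : d l = d (l - (y (max n p) : V)) := by
          rw [map_sub]
          have : d ((y (max n p) : V)) = 0 := (y (max n p)).2
          rw [this, sub_zero]
        rw [h2]
        exact hdF n _ h1
      have : d l ∈ (⊥ : Submodule K V) := by
        rw [← hF.2.2]
        exact (Submodule.mem_iInf _).2 hfin
      rwa [Submodule.mem_bot] at this
    refine ⟨B'.mkQ ⟨l, hlZ⟩, ?_⟩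
    intro n
    refine ⟨m n, fun i hi => ?_⟩
    obtain ⟨p, hp⟩ := hl n
    set j := max n p with hj
    have key1 : B'.mkQ ⟨l, hlZ⟩ - x (M j) ∈ G n := by
      refine ⟨⟨l, hlZ⟩ - y j, ?_, ?_⟩
      · show ((⟨l, hlZ⟩ - y j : ↥Z) : V) ∈ F n
        have : ((⟨l, hlZ⟩ - y j : ↥Z) : V) = l - (y j : V) := by push_cast; rfl
        rw [this]
        exact hp j (le_max_right _ _)
      · rw [map_sub, hyx j]
    have key2 : x (M j) - x i ∈ G n :=
      hm n (M j) i (le_trans (hMm n) (hMmono (le_max_left _ _))) hi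
    have h3 : B'.mkQ ⟨l, hlZ⟩ - x i
        = (B'.mkQ ⟨l, hlZ⟩ - x (M j)) + (x (M j) - x i) := by abel
    rw [h3]
    exact (G n).add_mem key1 key2
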